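/- Let g be a finite-dimensional complex Lie algebra, let (e,h,f) be an sl₂-triple in g, and let V be a finite-dimensional g-module. Then V is the direct sum of the eigenspaces of the action of h on V, and every eigenvalue of the action of h on V is an integer. -/

import Mathlib

namespace PaperStmt

open LieAlgebra Module

variable (R : Type*) {L : Type*} [CommRing R] [LieRing L] [LieAlgebra R L]

/-- The centralizer `g_x = {y ∈ g | ⁅y, x⁆ = 0}` of an element of a Lie algebra,
as a Lie subalgebra. -/
def centralizerOf (x : L) : LieSubalgebra R L where
  carrier := {y : L | ⁅y, x⁆ = 0}
  add_mem' := fun {a b} (ha : ⁅a, x⁆ = 0) (hb : ⁅b, x⁆ = 0) => by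
    show ⁅a + b, x⁆ = 0
    rw [add_lie, ha, hb, add_zero]
  zero_mem' := zero_lie x
  smul_mem' := fun c a (ha : ⁅a, x⁆ = 0) => by
    show ⁅c • a, x⁆ = 0
    rw [smul_lie, ha, smul_zero]
  lie_mem' := fun {a b} (ha : ⁅a, x⁆ = 0) (hb : ⁅b, x⁆ = 0) => by
    show ⁅⁅a, b⁆, x⁆ = 0
    rw [lie_lie, ha, hb, lie_zero, lie_zero, sub_zero]

/-- The subspace spanned by the brackets `⁅x, y⁆` with `x ∈ A`, `y ∈ B`. -/
def bracketSpan (A B : Submodule R L) : Submodule R L :=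
  Submodule.span R {z : L | ∃ x ∈ A, ∃ y ∈ B, z = ⁅x, y⁆}

/-- The derived subalgebra `[k, k]` of a Lie subalgebra `k`, as a subspace of the
ambient Lie algebra: the span of all brackets `⁅a, b⁆` with `a, b ∈ k`. -/
def derivedOf (K : LieSubalgebra R L) : Submodule R L :=
  bracketSpan R K.toSubmodule K.toSubmodule

/-- An element `e` of a Lie algebra is reachable if `e ∈ [g_e, g_e]`. -/
def IsReachable (e : L) : Prop :=
  e ∈ derivedOf R (centralizerOf R e)

/-- `g(k)`, the `k`-eigenspace of `ad h`. -/
def gradePiece (h : L) (k : ℤ) : Submodule R L :=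
  Module.End.eigenspace (LieAlgebra.ad R L h) (k : R)

/-- `g(k)_e = g(k) ∩ g_e`. -/
def gradePieceCent (e h : L) (k : ℤ) : Submodule R L :=
  gradePiece R h k ⊓ (centralizerOf R e).toSubmodule

/-- `g(≥1)_e`, the sum of the subspaces `g(k)_e` over all `k ≥ 1`. -/
def gradeGeOneCent (e h : L) : Submodule R L :=
  ⨆ k ∈ {k : ℤ | 1 ≤ k}, gradePieceCent R e h k

section Sl2Linear

open Module

variable {V : Type*} [AddCommGroup V] [Module ℂ V]

namespace Sl2Aux

/-- The product `(H - 0)(H - 1) ⋯ (H - (k-1))`. -/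
noncomputable def phi (H : Module.End ℂ V) : ℕ → Module.End ℂ V
  | 0 => 1
  | (k+1) => phi H k * (H - (k : ℂ) • 1)

/-- The standard `sl₂` commutation relations for endomorphisms. -/
structure Rel (E F H : Module.End ℂ V) : Prop where
  he : H * E = E * H + (2:ℂ) • E
  hf : H * F = F * H - (2:ℂ) • F
  hef : E * F = F * E + H

variable {E F H : Module.End ℂ V}

lemma shift_one {A : Module.End ℂ V} {c : ℂ} (h : H * A = A * H + c • A) (μ : ℂ) :
    (H - (μ + c) • 1) * A = A * (H - μ • 1) := by
  rw [sub_mul, mul_sub, h, smul_mul_assoc, one_mul, mul_smul_comm, mul_one]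
  module

lemma shift_pow {A : Module.End ℂ V} {c : ℂ} (h : H * A = A * H + c • A) (μ : ℂ) (k : ℕ) :
    (H - (μ + c) • 1) ^ k * A = A * (H - μ • 1) ^ k := by
  induction k with
  | zero => simp
  | succ k ih =>
      rw [pow_succ, pow_succ, mul_assoc, shift_one h, ← mul_assoc, ih, mul_assoc]

lemma mem_maxGen_shift {A : Module.End ℂ V} {c : ℂ} (h : H * A = A * H + c • A) {μ : ℂ} {v : V}
    (hv : v ∈ H.maxGenEigenspace μ) : A v ∈ H.maxGenEigenspace (μ + c) := by
  rw [Module.End.mem_maxGenEigenspace] at hv ⊢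
  obtain ⟨k, hk⟩ := hv
  exact ⟨k, by rw [← Module.End.mul_apply, shift_pow h, Module.End.mul_apply, hk, map_zero]⟩

lemma mem_maxGen_of_comm {f g : Module.End ℂ V} (h : Commute f g) {μ : ℂ} {v : V}
    (hv : v ∈ f.maxGenEigenspace μ) : g v ∈ f.maxGenEigenspace μ := by
  rw [Module.End.mem_maxGenEigenspace] at hv ⊢
  obtain ⟨k, hk⟩ := hv
  have hcomm : Commute ((f - μ • 1) ^ k) g :=
    ((h.sub_left ((Commute.one_left g).smul_left μ)).pow_left k)
  exact ⟨k, by rw [← Module.End.mul_apply, hcomm.eq, Module.End.mul_apply, hk, map_zero]⟩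

lemma pow_mem_maxGen {A : Module.End ℂ V} {c : ℂ} (h : H * A = A * H + c • A) {μ : ℂ} {v : V}
    (hv : v ∈ H.maxGenEigenspace μ) (k : ℕ) :
    (A ^ k) v ∈ H.maxGenEigenspace (μ + k * c) := by
  induction k with
  | zero => simpa using hv
  | succ k ih =>
      have := mem_maxGen_shift h ih
      rw [pow_succ', Module.End.mul_apply]
      convert this using 2
      push_cast
      ring

lemma exists_pow_apply_eq_zero [FiniteDimensional ℂ V] {A : Module.End ℂ V} {c : ℂ}
    (h : H * A = A * H + c • A) (hc : c ≠ 0) {μ : ℂ} {v : V}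
    (hv : v ∈ H.maxGenEigenspace μ) : ∃ k : ℕ, (A ^ k) v = 0 := by
  have hfin : Set.Finite {k : ℕ | μ + k * c ∈ spectrum ℂ H} := by
    have hinj : Set.InjOn (fun k : ℕ => μ + k * c) {k : ℕ | μ + k * c ∈ spectrum ℂ H} := by
      intro a _ b _ hab
      simp only at hab
      have : (a : ℂ) = b := by
        exact mul_right_cancel₀ hc (add_left_cancel hab)
      exact_mod_cast this
    exact Set.Finite.of_finite_image
      (Set.Finite.subset (Module.End.finite_spectrum H) (by rintro x ⟨k, hk, rfl⟩; exact hk)) hinj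
  obtain ⟨k, hk⟩ := (hfin.infinite_compl).nonempty
  refine ⟨k, ?_⟩
  by_contra hne
  apply hk
  have hmem := pow_mem_maxGen h hv k
  have hne_bot : H.maxGenEigenspace (μ + k * c) ≠ ⊥ :=
    Submodule.ne_bot_iff _ |>.mpr ⟨_, hmem, hne⟩
  have : H.HasUnifEigenvalue (μ + k * c) ⊤ := hne_bot
  exact (this.lt zero_lt_one).mem_spectrum


lemma eig_fixed {μ c : ℂ} (hne : c ≠ μ) {v : V} (hv : v ∈ H.maxGenEigenspace μ)
    (h0 : H v = c • v) : v = 0 := by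
  rw [Module.End.mem_maxGenEigenspace] at hv
  obtain ⟨k, hk⟩ := hv
  have key : ∀ m : ℕ, ((H - μ • 1) ^ m) v = (c - μ) ^ m • v := by
    intro m
    induction m with
    | zero => simp
    | succ m ih =>
        rw [pow_succ', Module.End.mul_apply, ih, map_smul]
        have h1 : (H - μ • (1 : Module.End ℂ V)) v = (c - μ) • v := by
          simp [LinearMap.sub_apply, h0, sub_smul]
        rw [h1, smul_smul, ← pow_succ]
  have h2 := key k
  rw [hk] at h2
  have hcm : (c - μ) ^ k ≠ 0 := pow_ne_zero _ (sub_ne_zero.mpr hne)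
  exact (smul_eq_zero.mp h2.symm).resolve_left hcm

lemma comm_sub_smul (H : Module.End ℂ V) (c : ℂ) : Commute H (H - c • 1) :=
  (Commute.refl H).sub_right ((Commute.one_right H).smul_right c)

lemma mem_maxGen_sub_smul {c μ : ℂ} {v : V} (hv : v ∈ H.maxGenEigenspace μ) :
    (H - c • 1) v ∈ H.maxGenEigenspace μ :=
  mem_maxGen_of_comm (comm_sub_smul H c) hv

/-- If all factors of `phi` avoid `μ`, then `phi` is injective on the generalized
eigenspace of `μ`. -/
lemma vanish_of_phi : ∀ (k : ℕ) {μ : ℂ} {v : V}, v ∈ H.maxGenEigenspace μ →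
    (∀ j : ℕ, j < k → μ ≠ (j : ℂ)) → (phi H k) v = 0 → v = 0 := by
  intro k
  induction k with
  | zero => intro μ v _ _ h; simpa [phi] using h
  | succ k ih =>
      intro μ v hv hμ h
      rw [phi, Module.End.mul_apply] at h
      have hw : (H - (k : ℂ) • 1) v ∈ H.maxGenEigenspace μ := mem_maxGen_sub_smul hv
      have hw0 : (H - (k : ℂ) • 1) v = 0 :=
        ih hw (fun j hj => hμ j (Nat.lt_succ_of_lt hj)) h
      have hHv : H v = (k : ℂ) • v := by
        have := sub_eq_zero.mp (by simpa [LinearMap.sub_apply] using hw0)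
        simpa using this
      exact eig_fixed (fun hc => hμ k (Nat.lt_succ_self k) hc.symm) hv hHv

lemma comm_sub_sub (H : Module.End ℂ V) (a b : ℂ) :
    Commute (H - a • 1) (H - b • 1) :=
  (comm_sub_smul H b).sub_left ((Commute.one_left (H - b • 1)).smul_left a)

lemma eig_of_phi {n : ℕ} : ∀ (k : ℕ) {v : V}, v ∈ H.maxGenEigenspace (n : ℂ) →
    n < k → (phi H k) v = 0 → H v = (n : ℂ) • v := by
  intro k
  induction k with
  | zero => intro v _ h; omega
  | succ k ih =>
      intro v hv hnk h
      rw [phi, Module.End.mul_apply] at h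
      set w := (H - (k : ℂ) • 1) v with hw_def
      have hw : w ∈ H.maxGenEigenspace (n : ℂ) := mem_maxGen_sub_smul hv
      rcases Nat.lt_or_ge n k with hlt | hge
      · -- k > n : inductive step
        have hHw : H w = (n : ℂ) • w := ih hw hlt h
        have hw0 : (H - (n : ℂ) • 1) w = 0 := by
          simp [LinearMap.sub_apply, hHw]
        set u := (H - (n : ℂ) • 1) v with hu_def
        have hu : u ∈ H.maxGenEigenspace (n : ℂ) := mem_maxGen_sub_smul hv
        have hu0 : (H - (k : ℂ) • 1) u = 0 := by
          have hcomm := comm_sub_sub H (n : ℂ) (k : ℂ)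
          calc (H - (k : ℂ) • 1) u = ((H - (k : ℂ) • 1) * (H - (n : ℂ) • 1)) v := rfl
            _ = ((H - (n : ℂ) • 1) * (H - (k : ℂ) • 1)) v := by rw [hcomm.eq]
            _ = (H - (n : ℂ) • 1) w := rfl
            _ = 0 := hw0
        have hHu : H u = (k : ℂ) • u := by
          have := sub_eq_zero.mp (by simpa [LinearMap.sub_apply] using hu0)
          simpa using this
        have hune : (k : ℂ) ≠ (n : ℂ) := by
          intro hc; exact absurd (Nat.cast_injective hc) (by omega)
        have hu_zero : u = 0 := eig_fixed hune hu hHu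
        have := sub_eq_zero.mp (by simpa [LinearMap.sub_apply, hu_def] using hu_zero)
        simpa using this
      · -- k = n : base case
        have hkn : k = n := by omega
        subst hkn
        have hw0 : w = 0 := by
          refine vanish_of_phi k hw (fun j hj hcast => ?_) h
          have : k = j := by exact_mod_cast hcast
          omega
        have := sub_eq_zero.mp (by simpa [LinearMap.sub_apply, hw_def] using hw0)
        simpa using this

lemma Rel.e_mul_f_pow (r : Rel E F H) : ∀ k : ℕ,
    E * F ^ (k+1) = F ^ (k+1) * E + ((k : ℂ) + 1) • (F ^ k * (H - (k : ℂ) • 1)) := by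
  intro k
  induction k with
  | zero => simp [r.hef]
  | succ k ih =>
      have hHF : (H - (k : ℂ) • 1) * F = F * (H - ((k : ℂ) + 2) • 1) := by
        rw [sub_mul, r.hf, mul_sub, smul_mul_assoc, one_mul, mul_smul_comm, mul_one]
        module
      have h1 : (F ^ (k+1) * E) * F = F ^ (k+1) * (F * E) + F ^ (k+1) * H := by
        rw [mul_assoc, r.hef, mul_add]
      have h2 : (F ^ k * (H - (k : ℂ) • 1)) * F = F ^ (k+1) * (H - ((k : ℂ) + 2) • 1) := by
        rw [mul_assoc, hHF, ← mul_assoc, ← pow_succ]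
      push_cast
      calc E * F ^ (k+1+1) = (E * F ^ (k+1)) * F := by rw [pow_succ, ← mul_assoc]
        _ = (F ^ (k+1) * E) * F + ((k : ℂ) + 1) • ((F ^ k * (H - (k : ℂ) • 1)) * F) := by
            rw [ih, add_mul, smul_mul_assoc]
        _ = (F ^ (k+1) * (F * E) + F ^ (k+1) * H)
              + ((k : ℂ) + 1) • (F ^ (k+1) * (H - ((k : ℂ) + 2) • 1)) := by rw [h1, h2]
        _ = F ^ (k+1+1) * E + ((k : ℂ) + 1 + 1) • (F ^ (k+1) * (H - ((k : ℂ) + 1) • 1)) := by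
            rw [pow_succ F (k+1), mul_assoc]
            simp only [mul_sub, mul_smul_comm, mul_one]
            module

lemma Rel.ekfk (r : Rel E F H) : ∀ (k : ℕ) {v : V}, E v = 0 →
    (E ^ k) ((F ^ k) v) = (k.factorial : ℂ) • (phi H k) v := by
  intro k
  induction k with
  | zero => intro v _; simp [phi]
  | succ k ih =>
      intro v hv
      set w := (H - (k : ℂ) • 1) v with hw_def
      have hEw : E w = 0 := by
        have hsh : (H - ((k : ℂ) + 2) • 1) * E = E * (H - (k : ℂ) • 1) :=
          shift_one r.he (k : ℂ)
        calc E w = (E * (H - (k : ℂ) • 1)) v := rfl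
          _ = ((H - ((k : ℂ) + 2) • 1) * E) v := by rw [hsh]
          _ = (H - ((k : ℂ) + 2) • 1) (E v) := rfl
          _ = 0 := by rw [hv, map_zero]
      have hstep : E ((F ^ (k+1)) v) = ((k : ℂ) + 1) • (F ^ k) w := by
        calc E ((F ^ (k+1)) v) = (E * F ^ (k+1)) v := rfl
          _ = (F ^ (k+1) * E) v + ((k : ℂ) + 1) • ((F ^ k * (H - (k : ℂ) • 1)) v) := by
              rw [r.e_mul_f_pow k]; simp [LinearMap.add_apply]
          _ = ((k : ℂ) + 1) • (F ^ k) w := by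
              rw [Module.End.mul_apply, hv, map_zero, zero_add, Module.End.mul_apply, hw_def]
      calc (E ^ (k+1)) ((F ^ (k+1)) v) = (E ^ k) (E ((F ^ (k+1)) v)) := by
            rw [pow_succ, Module.End.mul_apply]
        _ = ((k : ℂ) + 1) • ((E ^ k) ((F ^ k) w)) := by rw [hstep, map_smul]
        _ = ((k : ℂ) + 1) • ((k.factorial : ℂ) • (phi H k) w) := by rw [ih hEw]
        _ = ((k+1).factorial : ℂ) • (phi H (k+1)) v := by
            rw [smul_smul, phi, Module.End.mul_apply, ← hw_def, Nat.factorial_succ]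
            push_cast
            ring_nf

/-- The key primitive-vector lemma: a vector in a generalized eigenspace of `H`
killed by `E` lies in an honest eigenspace, with eigenvalue a natural number. -/
lemma Rel.prim [FiniteDimensional ℂ V] (r : Rel E F H) {μ : ℂ} {v : V}
    (hv : v ∈ H.maxGenEigenspace μ) (he : E v = 0) :
    (v ≠ 0 → ∃ n : ℕ, μ = n) ∧ (∀ n : ℕ, μ = n → H v = μ • v) := by
  have hF' : H * F = F * H + (-2 : ℂ) • F := by rw [r.hf]; module
  obtain ⟨k₀, hk₀⟩ := exists_pow_apply_eq_zero hF' (by norm_num) hv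
  have hphi : ∀ k : ℕ, k₀ ≤ k → (phi H k) v = 0 := by
    intro k hk
    have hFk : (F ^ k) v = 0 := by
      obtain ⟨m, rfl⟩ := Nat.exists_eq_add_of_le hk
      rw [add_comm, pow_add, Module.End.mul_apply, hk₀, map_zero]
    have := r.ekfk k he
    rw [hFk, map_zero] at this
    have hfac : ((k.factorial : ℂ)) ≠ 0 := by
      exact_mod_cast Nat.factorial_ne_zero k
    exact (smul_eq_zero.mp this.symm).resolve_left hfac
  constructor
  · intro hne
    by_contra hnot
    push_neg at hnot
    exact hne (vanish_of_phi k₀ hv (fun j _ => hnot j) (hphi k₀ le_rfl))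
  · rintro n rfl
    exact eig_of_phi (max k₀ (n+1)) hv (by omega)
      (hphi _ (le_max_left _ _))

lemma pow_mem_maxGen_of_comm {f g : Module.End ℂ V} (h : Commute f g) {μ : ℂ} {v : V}
    (hv : v ∈ f.maxGenEigenspace μ) (k : ℕ) : (g ^ k) v ∈ f.maxGenEigenspace μ :=
  mem_maxGen_of_comm (h.pow_right k) hv

/-- The Casimir operator. -/
noncomputable def cas (E F H : Module.End ℂ V) : Module.End ℂ V :=
  H * H + (2 : ℂ) • H + (4 : ℂ) • (F * E)

lemma Rel.he1 (r : Rel E F H) (X : Module.End ℂ V) :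
    H * (E * X) = E * (H * X) + (2 : ℂ) • (E * X) := by
  rw [← mul_assoc, r.he, add_mul, smul_mul_assoc, mul_assoc]

lemma Rel.hf1 (r : Rel E F H) (X : Module.End ℂ V) :
    H * (F * X) = F * (H * X) - (2 : ℂ) • (F * X) := by
  rw [← mul_assoc, r.hf, sub_mul, smul_mul_assoc, mul_assoc]

lemma Rel.hef1 (r : Rel E F H) (X : Module.End ℂ V) :
    E * (F * X) = F * (E * X) + H * X := by
  rw [← mul_assoc, r.hef, add_mul, mul_assoc]

lemma Rel.cas_comm_H (r : Rel E F H) : Commute (cas E F H) H := by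
  show _ = _
  simp only [cas, mul_add, add_mul, mul_smul_comm, smul_mul_assoc, mul_assoc,
    r.he1, r.hf1, r.hef1, mul_sub, sub_mul, smul_add, smul_sub, r.he, r.hf, r.hef]
  module

lemma Rel.cas_comm_E (r : Rel E F H) : Commute (cas E F H) E := by
  show _ = _
  simp only [cas, mul_add, add_mul, mul_smul_comm, smul_mul_assoc, mul_assoc,
    r.he1, r.hf1, r.hef1, mul_sub, sub_mul, smul_add, smul_sub, r.he, r.hf, r.hef]
  module

lemma Rel.cas_prim (r : Rel E F H) {n : ℕ} {v : V} (he : E v = 0)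
    (hh : H v = (n : ℂ) • v) : (cas E F H) v = ((n : ℂ) ^ 2 + 2 * n) • v := by
  have : (cas E F H) v = H (H v) + (2 : ℂ) • (H v) + (4 : ℂ) • (F (E v)) := by
    simp [cas, LinearMap.add_apply, LinearMap.smul_apply, Module.End.mul_apply]
  rw [this, he, map_zero, smul_zero, add_zero, hh, map_smul, hh, smul_smul, smul_smul]
  rw [← add_smul]
  ring_nf

lemma Rel.lam (r : Rel E F H) {lam : ℂ} {n : ℕ} {w : V}
    (h1 : w ∈ (cas E F H).maxGenEigenspace lam) (hne : w ≠ 0) (he : E w = 0)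
    (hH : H w = (n : ℂ) • w) : lam = (n : ℂ) ^ 2 + 2 * n := by
  by_contra hc
  exact hne (eig_fixed (fun h => hc h.symm) h1 (r.cas_prim he hH))

lemma nat_root_unique {n m : ℕ} (h : ((n : ℂ)) ^ 2 + 2 * n = (m : ℂ) ^ 2 + 2 * m) : n = m := by
  have h2 : ((n : ℂ) - m) * ((n : ℂ) + m + 2) = 0 := by linear_combination h
  rcases mul_eq_zero.mp h2 with h3 | h3
  · have : (n : ℂ) = m := by linear_combination h3
    exact_mod_cast this
  · exfalso
    have : ((n + m + 2 : ℕ) : ℂ) = 0 := by push_cast; linear_combination h3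
    have := Nat.cast_eq_zero.mp this
    omega

lemma Rel.stringTop0 (r : Rel E F H) [FiniteDimensional ℂ V] {μ : ℂ} {v : V}
    (hv : v ∈ H.maxGenEigenspace μ) (hne : v ≠ 0) :
    ∃ (n j : ℕ) (w : V), μ = (n : ℂ) - 2 * j ∧ w ≠ 0 ∧ E w = 0 ∧ w = (E ^ j) v ∧
      H w = (n : ℂ) • w := by
  classical
  obtain ⟨k, hk⟩ := exists_pow_apply_eq_zero r.he two_ne_zero hv
  have hex : ∃ m : ℕ, (E ^ m) v = 0 := ⟨k, hk⟩
  have hr₀ : (E ^ (Nat.find hex)) v = 0 := Nat.find_spec hex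
  have hr₀pos : Nat.find hex ≠ 0 := by
    intro h0
    rw [h0] at hr₀
    simp at hr₀
    exact hne hr₀
  obtain ⟨j, hj⟩ : ∃ j, Nat.find hex = j + 1 := ⟨Nat.find hex - 1, by omega⟩
  set w := (E ^ j) v with hw_def
  have hwne : w ≠ 0 := Nat.find_min hex (by omega)
  have hwE : E w = 0 := by
    rw [hw_def, ← Module.End.mul_apply, ← pow_succ']
    rw [hj] at hr₀
    exact hr₀
  have hwmem : w ∈ H.maxGenEigenspace (μ + j * 2) := pow_mem_maxGen r.he hv j
  obtain ⟨n, hn⟩ := (r.prim hwmem hwE).1 hwne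
  have hH : H w = (μ + j * 2) • w := (r.prim hwmem hwE).2 n hn
  refine ⟨n, j, w, by linear_combination hn, hwne, hwE, rfl, by rw [hH, hn]⟩

lemma Rel.eigen_of_D (r : Rel E F H) [FiniteDimensional ℂ V] : ∀ (j n : ℕ) (v : V),
    v ∈ (cas E F H).maxGenEigenspace ((n : ℂ) ^ 2 + 2 * n) →
    v ∈ H.maxGenEigenspace ((n : ℂ) - 2 * j) → H v = ((n : ℂ) - 2 * j) • v := by
  intro j
  induction j with
  | zero =>
      intro n v h1 h2
      have h2' : v ∈ H.maxGenEigenspace (n : ℂ) := by simpa using h2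
      have hEv : E v = 0 := by
        by_contra hEv
        have hE1 : E v ∈ (cas E F H).maxGenEigenspace ((n : ℂ) ^ 2 + 2 * n) :=
          mem_maxGen_of_comm r.cas_comm_E h1
        have hE2 : E v ∈ H.maxGenEigenspace ((n : ℂ) + 2) := mem_maxGen_shift r.he h2'
        obtain ⟨n', j', w, heq, hwne, hwE, hwdef, hwH⟩ := r.stringTop0 hE2 hEv
        have hwC : w ∈ (cas E F H).maxGenEigenspace ((n : ℂ) ^ 2 + 2 * n) := by
          rw [hwdef]
          exact pow_mem_maxGen_of_comm r.cas_comm_E hE1 j'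
        have hlam := r.lam hwC hwne hwE hwH
        have hnn' : n' = n := nat_root_unique hlam.symm
        subst hnn'
        have : ((2 * j' + 2 : ℕ) : ℂ) = 0 := by push_cast; linear_combination heq
        have := Nat.cast_eq_zero.mp this
        omega
      have := (r.prim h2' hEv).2 n rfl
      simpa using this
  | succ j ih =>
      intro n v h1 h2
      have hμ2 : (n : ℂ) - 2 * (j+1 : ℕ) + 2 = (n : ℂ) - 2 * j := by push_cast; ring
      have hE2 : E v ∈ H.maxGenEigenspace ((n : ℂ) - 2 * j) := by
        have := mem_maxGen_shift r.he h2
        rwa [hμ2] at this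
      have hE1 : E v ∈ (cas E F H).maxGenEigenspace ((n : ℂ) ^ 2 + 2 * n) :=
        mem_maxGen_of_comm r.cas_comm_E h1
      have hIH : H (E v) = ((n : ℂ) - 2 * j) • (E v) := ih n (E v) hE1 hE2
      set μ := (n : ℂ) - 2 * (j+1 : ℕ) with hμ_def
      set u := (H - μ • 1) v with hu_def
      have hu2 : u ∈ H.maxGenEigenspace μ := mem_maxGen_sub_smul h2
      have hu1 : u ∈ (cas E F H).maxGenEigenspace ((n : ℂ) ^ 2 + 2 * n) := by
        refine mem_maxGen_of_comm ?_ h1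
        exact r.cas_comm_H.sub_right ((Commute.one_right _).smul_right μ)
      have hEu : E u = 0 := by
        have hsh : (H - (μ + 2) • 1) * E = E * (H - μ • 1) := shift_one r.he μ
        calc E u = (E * (H - μ • 1)) v := rfl
          _ = ((H - (μ + 2) • 1) * E) v := by rw [hsh]
          _ = H (E v) - (μ + 2) • (E v) := by
              simp [LinearMap.sub_apply, Module.End.mul_apply]
          _ = 0 := by rw [hIH, hμ2, sub_self]
      have hu0 : u = 0 := by
        by_contra hu
        obtain ⟨m, hm⟩ := (r.prim hu2 hEu).1 hu
        have hH : H u = (m : ℂ) • u := by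
          have := (r.prim hu2 hEu).2 m hm
          rwa [hm] at this
        have hlam := r.lam hu1 hu hEu hH
        have hmn : m = n := nat_root_unique hlam.symm
        subst hmn
        rw [hμ_def] at hm
        have : ((2 * (j+1) : ℕ) : ℂ) = 0 := by push_cast at hm ⊢; linear_combination hm.symm
        have := Nat.cast_eq_zero.mp this
        omega
      have := sub_eq_zero.mp (by simpa [LinearMap.sub_apply, hu_def] using hu0)
      simpa using this

theorem sl2_conclusion [FiniteDimensional ℂ V] (r : Rel E F H) :
    (⨆ μ : ℂ, Module.End.eigenspace H μ) = ⊤ ∧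
    (∀ μ : ℂ, H.HasEigenvalue μ → ∃ k : ℤ, μ = (k : ℂ)) := by
  constructor
  · have hdec := Module.End.iSup_iInf_maxGenEigenspace_eq_top_of_iSup_maxGenEigenspace_eq_top_of_commute
      (K := ℂ) (M := V) ![cas E F H, H]
      (by
        intro i j _
        fin_cases i <;> fin_cases j <;>
          simp [Commute.refl, r.cas_comm_H, r.cas_comm_H.symm])
      (fun i => Module.End.iSup_maxGenEigenspace_eq_top _)
    rw [← top_le_iff, ← hdec]
    refine iSup_le fun χ => ?_
    have key : (⨅ i, (![cas E F H, H] i).maxGenEigenspace (χ i)) ≤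
        Module.End.eigenspace H (χ 1) := by
      intro v hv
      have h1 : v ∈ (cas E F H).maxGenEigenspace (χ 0) := by
        have := (Submodule.mem_iInf _).mp hv 0
        simpa using this
      have h2 : v ∈ H.maxGenEigenspace (χ 1) := by
        have := (Submodule.mem_iInf _).mp hv 1
        simpa using this
      rw [Module.End.mem_eigenspace_iff]
      rcases eq_or_ne v 0 with rfl | hne
      · simp
      obtain ⟨n, j, w, heq, hwne, hwE, hwdef, hwH⟩ := r.stringTop0 h2 hne
      have hwC : w ∈ (cas E F H).maxGenEigenspace (χ 0) := by
        rw [hwdef]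
        exact pow_mem_maxGen_of_comm r.cas_comm_E h1 j
      have hlam := r.lam hwC hwne hwE hwH
      rw [hlam] at h1
      rw [heq] at h2 ⊢
      exact r.eigen_of_D j n v h1 h2
    exact key.trans (le_iSup _ (χ 1))
  · intro μ hμ
    obtain ⟨v, hv⟩ := hμ.exists_hasEigenvector
    have hmem : v ∈ H.maxGenEigenspace μ := (H.genEigenspace μ).monotone le_top hv.1
    obtain ⟨n, j, w, heq, -, -, -, -⟩ := r.stringTop0 hmem hv.2
    exact ⟨(n : ℤ) - 2 * j, by rw [heq]; push_cast; ring⟩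

end Sl2Aux

end Sl2Linear

attribute [local instance 100] LieRing.ofAssociativeRing

/-- For an `sl₂`-triple `(e,h,f)` in a finite-dimensional complex Lie algebra and a
finite-dimensional module `V`, the module `V` is the direct sum of the eigenspaces of
the action of `h`, and every eigenvalue of the action of `h` on `V` is an integer. -/
theorem module_direct_sum_eigenspaces_and_integral {L : Type*} [LieRing L] [LieAlgebra ℂ L]
    [FiniteDimensional ℂ L] {V : Type*} [AddCommGroup V] [Module ℂ V]
    [LieRingModule L V] [LieModule ℂ L V] [FiniteDimensional ℂ V]
    (e h f : L) (t : IsSl2Triple h e f) :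
    iSupIndep (fun μ : ℂ => Module.End.eigenspace (LieModule.toEnd ℂ L V h) μ) ∧
    (⨆ μ : ℂ, Module.End.eigenspace (LieModule.toEnd ℂ L V h) μ) = ⊤ ∧
    (∀ μ : ℂ, Module.End.HasEigenvalue (LieModule.toEnd ℂ L V h) μ → ∃ k : ℤ, μ = (k : ℂ))    := by
  set E := LieModule.toEnd ℂ L V e with hE_def
  set F := LieModule.toEnd ℂ L V f with hF_def
  set H := LieModule.toEnd ℂ L V h with hH_def
  have r : Sl2Aux.Rel E F H := by
    refine ⟨?_, ?_, ?_⟩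
    · have h1 : ⁅H, E⁆ = (2 : ℂ) • E := by
        rw [hH_def, hE_def, ← LieHom.map_lie (LieModule.toEnd ℂ L V) h e,
          t.lie_h_e_smul (R := ℂ), map_smul]
      rw [Ring.lie_def] at h1
      rw [← h1]; abel
    · have h1 : ⁅H, F⁆ = -((2 : ℂ) • F) := by
        rw [hH_def, hF_def, ← LieHom.map_lie (LieModule.toEnd ℂ L V) h f,
          t.lie_lie_smul_f (R := ℂ), map_neg, map_smul]
      rw [Ring.lie_def] at h1
      rw [← sub_eq_zero]
      rw [← sub_eq_zero] at h1
      rw [← h1]; abel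
    · have h1 : ⁅E, F⁆ = H := by
        rw [hH_def, hE_def, hF_def, ← LieHom.map_lie (LieModule.toEnd ℂ L V) e f,
          t.lie_e_f]
      rw [Ring.lie_def] at h1
      rw [← h1]; abel
  obtain ⟨htop, hint⟩ := Sl2Aux.sl2_conclusion r
  exact ⟨Module.End.independent_genEigenspace H 1, htop, hint⟩



end PaperStmt
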